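/- Committal rate of softmax PG is at most 1: fix a ∈ [K], θ̃_1 ∈ ℝ^K and a constant learning rate η ∈ (0,1], and define the fixed-sampling softmax PG sequence θ̃_{t+1} := θ̃_t + η·g_a(θ̃_t). Then there exists T ≥ 1 such that for all t ≥ T, t·(1 − π_{θ̃_t}(a)) ≥ 1/(6·r(a)); in particular 1 − π_{θ̃_t}(a) cannot decrease faster than order 1/t. -/

import Mathlib

open Finset Real Filter

/-- Softmax policy: `π_θ(a) = exp(θ(a)) / Σ_{a'} exp(θ(a'))`. -/
noncomputable def softmax {K : ℕ} (θ : Fin K → ℝ) (a : Fin K) : ℝ :=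
  Real.exp (θ a) / ∑ a', Real.exp (θ a')

/-- On-policy IS stochastic softmax policy gradient for sampled action `a`:
`g_a(θ)(i) = 1{i = a}·r(a) − π_θ(i)·r(a)`. -/
noncomputable def stochPG {K : ℕ} (r : Fin K → ℝ) (a : Fin K) (θ : Fin K → ℝ)
    (i : Fin K) : ℝ :=
  (if i = a then r a else 0) - softmax θ i * r a

lemma sum_exp_pos {K : ℕ} [NeZero K] (θ : Fin K → ℝ) : 0 < ∑ a', Real.exp (θ a') :=
  Finset.sum_pos (fun i _ => Real.exp_pos _) ⟨⟨0, Nat.pos_of_ne_zero (NeZero.ne K)⟩, Finset.mem_univ _⟩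

lemma softmax_pos {K : ℕ} [NeZero K] (θ : Fin K → ℝ) (i : Fin K) : 0 < softmax θ i :=
  div_pos (Real.exp_pos _) (sum_exp_pos θ)

lemma sum_softmax {K : ℕ} [NeZero K] (θ : Fin K → ℝ) : ∑ i, softmax θ i = 1 := by
  unfold softmax
  rw [← Finset.sum_div, div_self (ne_of_gt (sum_exp_pos θ))]

lemma aux_final (c ra S A t : ℝ) (hc0 : 0 < c) (hcr : c ≤ ra) (hS0 : 0 < S)
    (hSsm : S < 1/10) (hct : A ≤ c * t) (hB : 1 ≤ S * (A + 5 * c / 2 * t))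
    (htpos : 0 ≤ t) : 1 * (1 + S) ≤ (t + 1) * S * (6 * ra) := by
  have h1 : S * A ≤ S * (c * t) := mul_le_mul_of_nonneg_left hct hS0.le
  have h2 : 1 ≤ (7/2) * (S * (c * t)) := by nlinarith
  have h3 : 0 ≤ S * c := mul_nonneg hS0.le hc0.le
  have h4 : 1 + S ≤ (t + 1) * S * (6 * c) := by nlinarith
  have h5 : (t + 1) * S * (6 * c) ≤ (t + 1) * S * (6 * ra) := by
    have : (0:ℝ) ≤ (t + 1) * S * 6 := by positivity
    nlinarith
  linarith

lemma aux_step (c S S' : ℝ) (hc0 : 0 < c) (hc1 : c ≤ 1) (hS0 : 0 < S)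
    (hSsm : S < 1/10) (hS1 : 0 < S')
    (hlow0 : Real.exp (-(2 * c * (S / (1 + S)))) * S ≤ S') :
    1 / S' ≤ 1 / S + 5 * c / 2 := by
  have h1S : (0:ℝ) < 1 + S := by linarith
  have hlow : (1 - 2 * c * S) * S ≤ S' := by
    have h1 : Real.exp (-(2 * c * S)) ≤ Real.exp (-(2 * c * (S / (1 + S)))) := by
      apply Real.exp_le_exp.2
      have hq : S / (1 + S) ≤ S := by
        rw [div_le_iff₀ h1S]; nlinarith
      nlinarith
    have h2 : 1 - 2 * c * S ≤ Real.exp (-(2 * c * S)) := by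
      have := Real.add_one_le_exp (-(2 * c * S))
      linarith
    calc (1 - 2 * c * S) * S ≤ Real.exp (-(2 * c * S)) * S :=
          mul_le_mul_of_nonneg_right h2 hS0.le
      _ ≤ Real.exp (-(2 * c * (S / (1 + S)))) * S :=
          mul_le_mul_of_nonneg_right h1 hS0.le
      _ ≤ S' := hlow0
  have hcS : c * S < 1/10 := by nlinarith [mul_le_mul_of_nonneg_right hc1 hS0.le]
  have hpos2 : 0 < (1 - 2 * c * S) * S := mul_pos (by linarith) hS0
  have h3 : 1 / S' ≤ 1 / ((1 - 2 * c * S) * S) :=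
    one_div_le_one_div_of_le hpos2 hlow
  have h4 : 1 / ((1 - 2 * c * S) * S) ≤ 1 / S + 5 * c / 2 := by
    rw [div_le_iff₀ hpos2]
    have hexp : (1 / S + 5 * c / 2) * ((1 - 2 * c * S) * S)
        = (1 - 2 * c * S) + (5 * c / 2) * S * (1 - 2 * c * S) := by
      field_simp
    rw [hexp]
    nlinarith [mul_nonneg (mul_pos hc0 hS0).le
      (show (0:ℝ) ≤ 1 - 10 * (c * S) by linarith)]
  linarith

/-- Committal rate of softmax PG is at most 1: for the fixed-sampling sequence
`θ_{t+1} = θ_t + η·g_a(θ_t)` with a constant learning rate `η ∈ (0,1]`, there is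
`T` such that `t·(1 − π_{θ_t}(a)) ≥ 1/(6·r(a))` for all `t ≥ T`; so `1 − π_{θ_t}(a)`
cannot decrease faster than order `1/t`.  (Here `θ 0` is the paper's `θ_1`, so the
factor `t` becomes `t + 1`.) -/
theorem committal_rate_softmax_pg_le_one
    {K : ℕ} (hK : 2 ≤ K) (r : Fin K → ℝ)
    (hr : ∀ a, 0 < r a ∧ r a ≤ 1)
    (a : Fin K) (η : ℝ) (hη : 0 < η) (hη1 : η ≤ 1)
    (θ : ℕ → Fin K → ℝ)
    (hupd : ∀ t, θ (t + 1) = fun i => θ t i + η * stochPG r a (θ t) i) :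
    ∃ T : ℕ, ∀ t ≥ T, 1 / (6 * r a) ≤ ((t : ℝ) + 1) * (1 - softmax (θ t) a) := by
  haveI : NeZero K := ⟨by omega⟩
  obtain ⟨hra, hra1⟩ := hr a
  set c := η * r a with hcdef
  have hc0 : 0 < c := mul_pos hη hra
  have hc1 : c ≤ 1 := by nlinarith
  have hcr : c ≤ r a := by nlinarith
  set S : ℕ → ℝ := fun t => ∑ i ∈ Finset.univ.erase a, Real.exp (θ t i - θ t a) with hSdef
  -- basic facts
  obtain ⟨b, hb⟩ : ∃ b : Fin K, b ≠ a := by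
    haveI : Nontrivial (Fin K) := by
      apply Fin.nontrivial_iff_two_le.mpr hK
    exact exists_ne a
  have hSpos : ∀ t, 0 < S t := by
    intro t
    exact Finset.sum_pos (fun i _ => Real.exp_pos _)
      ⟨b, Finset.mem_erase.2 ⟨hb, Finset.mem_univ b⟩⟩
  have hD : ∀ t, (∑ a', Real.exp (θ t a')) = Real.exp (θ t a) * (1 + S t) := by
    intro t
    rw [mul_add, mul_one, hSdef, Finset.mul_sum,
      ← Finset.add_sum_erase _ _ (Finset.mem_univ a)]
    congr 1
    refine Finset.sum_congr rfl fun i _ => ?_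
    rw [← Real.exp_add]
    ring_nf
  have hπ : ∀ t, softmax (θ t) a = 1 / (1 + S t) := by
    intro t
    have h1S : (0:ℝ) < 1 + S t := by linarith [hSpos t]
    rw [softmax, hD t, div_mul_eq_div_div_swap, div_right_comm,
      div_self (Real.exp_ne_zero _)]
  have h1π : ∀ t, 1 - softmax (θ t) a = S t / (1 + S t) := by
    intro t
    have h1S : (0:ℝ) < 1 + S t := by linarith [hSpos t]
    rw [hπ t]
    field_simp
    ring
  have hπa_lt : ∀ t, softmax (θ t) a < 1 := by
    intro t
    have h1S : (0:ℝ) < 1 + S t := by linarith [hSpos t]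
    rw [hπ t, div_lt_one h1S]
    linarith [hSpos t]
  -- each non-a softmax is at most 1 - π_a
  have hπi_le : ∀ t i, i ≠ a → softmax (θ t) i ≤ 1 - softmax (θ t) a := by
    intro t i hi
    have heq : 1 - softmax (θ t) a = ∑ j ∈ Finset.univ.erase a, softmax (θ t) j := by
      have h2 := sum_softmax (θ t)
      rw [← Finset.add_sum_erase _ _ (Finset.mem_univ a)] at h2
      linarith
    rw [heq]
    exact Finset.single_le_sum (fun j _ => (softmax_pos (θ t) j).le)
      (Finset.mem_erase.2 ⟨hi, Finset.mem_univ i⟩)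
  -- the update for the difference
  have hdiff : ∀ t i, i ≠ a →
      θ (t+1) i - θ (t+1) a =
        (θ t i - θ t a) - c * (1 - softmax (θ t) a + softmax (θ t) i) := by
    intro t i hi
    rw [hupd t]
    simp only [stochPG, if_neg hi, if_pos rfl, eq_self_iff_true, if_true]
    ring
  -- per-step bounds on S
  have hmono : ∀ t, S (t+1) ≤ S t := by
    intro t
    refine Finset.sum_le_sum fun i hi => ?_
    have hi' : i ≠ a := (Finset.mem_erase.1 hi).1
    rw [hdiff t i hi']
    apply Real.exp_le_exp.2
    have h1 := hπa_lt t
    have h2 := softmax_pos (θ t) i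
    nlinarith
  have hanti : ∀ s t : ℕ, s ≤ t → S t ≤ S s := by
    intro s t h
    induction t with
    | zero => simp_all
    | succ n ih =>
      rcases Nat.lt_or_ge s (n+1) with h' | h'
      · exact le_trans (hmono n) (ih (by omega))
      · have hsn : s = n + 1 := by omega
        simp [hsn]
  have hkey : ∀ t, Real.exp (-(2 * c * (S t / (1 + S t)))) * S t ≤ S (t+1) := by
    intro t
    simp only [hSdef]
    rw [Finset.mul_sum]
    refine Finset.sum_le_sum fun i hi => ?_
    have hi' : i ≠ a := (Finset.mem_erase.1 hi).1
    rw [hdiff t i hi', ← Real.exp_add]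
    apply Real.exp_le_exp.2
    have h2 := hπi_le t i hi'
    have h3 := h1π t
    nlinarith
  -- main dichotomy
  clear hdiff hD hSdef hcdef hupd
  clear_value S c
  by_cases hbig : ∀ t, (1:ℝ)/10 ≤ S t
  · -- S always at least 1/10, so 1 - π ≥ 1/11
    refine ⟨⌈11 / (6 * r a)⌉₊, fun t ht => ?_⟩
    have h1S : (0:ℝ) < 1 + S t := by linarith [hSpos t]
    have h11 : (1:ℝ)/11 ≤ 1 - softmax (θ t) a := by
      rw [h1π t, div_le_div_iff₀ (by norm_num) h1S]
      linarith [hbig t]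
    have hT : 11 / (6 * r a) ≤ (t : ℝ) := by
      calc 11 / (6 * r a) ≤ (⌈11 / (6 * r a)⌉₊ : ℝ) := Nat.le_ceil _
        _ ≤ (t : ℝ) := by exact_mod_cast ht
    have h0 : (0:ℝ) < 6 * r a := by linarith
    have hmid : 1 / (6 * r a) ≤ ((t : ℝ) + 1) * (1/11) := by
      rw [div_le_iff₀ h0]
      rw [div_le_iff₀ h0] at hT
      linarith
    calc 1 / (6 * r a) ≤ ((t : ℝ) + 1) * (1/11) := hmid
      _ ≤ ((t : ℝ) + 1) * (1 - softmax (θ t) a) := by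
          apply mul_le_mul_of_nonneg_left h11
          positivity
  · push_neg at hbig
    obtain ⟨T0, hT0⟩ := hbig
    set A := 1 / S T0 with hA
    have hApos : 0 < A := div_pos one_pos (hSpos T0)
    have hA10 : 10 < A := by
      rw [hA, lt_div_iff₀ (hSpos T0)]
      linarith
    have hsmall : ∀ t, T0 ≤ t → S t < 1/10 := fun t ht => lt_of_le_of_lt (hanti T0 t ht) hT0
    -- one-step reciprocal bound
    have hstep : ∀ t, T0 ≤ t → 1 / S (t+1) ≤ 1 / S t + 5 * c / 2 := fun t ht =>
      aux_step c (S t) (S (t+1)) hc0 hc1 (hSpos t) (hsmall t ht) (hSpos (t+1)) (hkey t)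
    -- iterate
    have hiter : ∀ n : ℕ, 1 / S (T0 + n) ≤ A + (5 * c / 2) * n := by
      intro n
      induction n with
      | zero => simp [hA]
      | succ m ih =>
        have hst := hstep (T0 + m) (by omega)
        have hm : 1 / S (T0 + m + 1) ≤ A + (5 * c / 2) * m + 5 * c / 2 := by linarith
        have heq : T0 + (m + 1) = T0 + m + 1 := by omega
        rw [heq]
        push_cast
        linarith
    have hrec : ∀ t, T0 ≤ t → 1 / S t ≤ A + (5 * c / 2) * t := by
      intro t ht
      obtain ⟨n, rfl⟩ := Nat.exists_eq_add_of_le ht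
      calc 1 / S (T0 + n) ≤ A + (5 * c / 2) * n := hiter n
        _ ≤ A + (5 * c / 2) * ((T0 + n : ℕ) : ℝ) := by
            push_cast
            have hTn : (0:ℝ) ≤ (T0 : ℝ) := by positivity
            nlinarith
    -- final T
    refine ⟨max T0 ⌈A / c⌉₊, fun t ht => ?_⟩
    have ht1 : T0 ≤ t := le_trans (le_max_left _ _) ht
    have ht2 : A / c ≤ (t : ℝ) := by
      calc A / c ≤ (⌈A / c⌉₊ : ℝ) := Nat.le_ceil _
        _ ≤ (t : ℝ) := by exact_mod_cast le_trans (le_max_right _ _) ht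
    have hct : A ≤ c * t := by
      rw [div_le_iff₀ hc0] at ht2
      linarith
    have hS0 := hSpos t
    have h1S : (0:ℝ) < 1 + S t := by linarith
    have hB : 1 ≤ S t * (A + (5 * c / 2) * t) := by
      have hrt := hrec t ht1
      rw [div_le_iff₀ hS0] at hrt
      linarith
    rw [h1π t, ← mul_div_assoc, div_le_div_iff₀ (by linarith) h1S]
    have htpos : (0:ℝ) ≤ (t:ℝ) := by positivity
    exact aux_final c (r a) (S t) A t hc0 hcr hS0 (hsmall t ht1) hct hB htpos
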